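/- arXiv:1003.0501 — 2 statements merged into one kernel-verified Lean document; each statement's English description precedes it below -/
import Mathlib

section
/- Let n be odd and w a primitive n-th root of unity. The projection operators p^α, α ∈ S, on ℂⁿ ⊗ ℂⁿ sum to the identity: Σ_{α ∈ S} p^α = I ⊗ I. -/
open Matrix Kronecker Finset

/-- elementary n×n matrix with indices mod n. -/
noncomputable def EM (n : ℕ) [NeZero n] (i j : ZMod n) : Matrix (ZMod n) (ZMod n) ℂ :=
  Matrix.single i j 1

/-- normalisation constant: `1/2` for `α=(0,0)`, else `1`. -/
noncomputable def ccoef (a b : ℕ) : ℂ := if a = 0 ∧ b = 0 then 1 / 2 else 1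

/-- the projection operator
`p^{(a,b)} = (c/n) Σ_{i,j} [w^{2bj} e_{i+a+j,i+a}⊗e_{i+j,i} + w^{-2bj} e_{i-a+j,i-a}⊗e_{i+j,i}]`. -/
noncomputable def proj (n : ℕ) [NeZero n] (w : ℂ) (a b : ℕ) :
    Matrix (ZMod n × ZMod n) (ZMod n × ZMod n) ℂ :=
  (ccoef a b / (n : ℂ)) • ∑ i : ZMod n, ∑ j : ZMod n,
    (w ^ ((2 * (b : ℤ) * (j.val : ℤ))) • (EM n (i + (a : ZMod n) + j) (i + (a : ZMod n)) ⊗ₖ EM n (i + j) i)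
      + w ^ ((-(2 * (b : ℤ) * (j.val : ℤ)))) • (EM n (i - (a : ZMod n) + j) (i - (a : ZMod n)) ⊗ₖ EM n (i + j) i))

/-- the index set `S`: `(0,0)`; `(0,b)` for `1 ≤ b ≤ (n-1)/2`; `(a,b)` for
`1 ≤ a ≤ (n-1)/2`, `0 ≤ b ≤ n-1`. -/
def idxS (n : ℕ) : Finset (ℕ × ℕ) :=
  (Finset.range n ×ˢ Finset.range n).filter
    (fun p => (p.1 = 0 ∧ p.2 = 0) ∨ (p.1 = 0 ∧ 1 ≤ p.2 ∧ p.2 ≤ (n - 1) / 2)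
      ∨ (1 ≤ p.1 ∧ p.1 ≤ (n - 1) / 2))

set_option linter.unusedSectionVars false

section aux
variable {n : ℕ} [NeZero n] {w : ℂ}

lemma wzpow (hw : IsPrimitiveRoot w n) (m : ℤ) :
    w ^ m = w ^ ((m : ZMod n)).val := by
  have hw0 : w ≠ 0 := hw.ne_zero (NeZero.ne n)
  have hn : w ^ (n : ℤ) = 1 := by exact_mod_cast hw.pow_eq_one
  conv_lhs => rw [← Int.emod_add_mul_ediv m n]
  rw [zpow_add₀ hw0, _root_.zpow_mul, hn, _root_.one_zpow, mul_one,
    show (m % (n:ℤ)) = (((m : ZMod n)).val : ℤ) from (ZMod.val_intCast m).symm, zpow_natCast]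

lemma wpow_eq (hw : IsPrimitiveRoot w n) {m : ℤ} {x : ZMod n} (h : (m : ZMod n) = x) :
    w ^ m = w ^ x.val := by rw [wzpow hw m, h]

lemma wnpow_eq (hw : IsPrimitiveRoot w n) {m : ℕ} {x : ZMod n} (h : (m : ZMod n) = x) :
    w ^ m = w ^ x.val := by
  have := wzpow hw (m : ℤ)
  rw [zpow_natCast] at this
  rw [this]; congr 1
  rw [show ((m : ℤ) : ZMod n) = x by push_cast; exact h]

/-- the "one-sided" building block of the projections. -/
noncomputable def Qmat (n : ℕ) [NeZero n] (w : ℂ) (a b : ZMod n) :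
    Matrix (ZMod n × ZMod n) (ZMod n × ZMod n) ℂ :=
  ∑ i : ZMod n, ∑ j : ZMod n,
    w ^ ((2 * b * j : ZMod n)).val • (EM n (i + a + j) (i + a) ⊗ₖ EM n (i + j) i)

lemma proj_eq (hw : IsPrimitiveRoot w n) (a b : ℕ) :
    proj n w a b
      = (ccoef a b / (n : ℂ)) • (Qmat n w (a : ZMod n) (b : ZMod n)
          + Qmat n w (-(a : ZMod n)) (-(b : ZMod n))) := by
  unfold proj Qmat
  congr 1
  rw [← Finset.sum_add_distrib]
  refine Finset.sum_congr rfl fun i _ => ?_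
  rw [← Finset.sum_add_distrib]
  refine Finset.sum_congr rfl fun j _ => ?_
  congr 1
  · rw [wpow_eq hw (x := 2 * (b : ZMod n) * j)
      (by push_cast [ZMod.natCast_val, ZMod.cast_id]; ring)]
  · rw [wpow_eq hw (x := 2 * (-(b : ZMod n)) * j)
      (by push_cast [ZMod.natCast_val, ZMod.cast_id]; ring)]
    rw [sub_eq_add_neg]

lemma geom (hw : IsPrimitiveRoot w n) (hodd : Odd n) (j : ZMod n) :
    ∑ b : ZMod n, (w ^ ((2 * b * j : ZMod n)).val) = if j = 0 then (n : ℂ) else 0 := by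
  set z : ℂ := w ^ ((2 * j : ZMod n)).val with hz
  have hterm : ∀ b : ZMod n, w ^ ((2 * b * j : ZMod n)).val = z ^ b.val := by
    intro b
    rw [← (wnpow_eq hw (m := (2 * j : ZMod n).val * b.val) (x := 2 * b * j)
      (by push_cast [ZMod.natCast_val, ZMod.cast_id]; ring)), pow_mul]
  simp only [hterm]
  have hsum : ∑ b : ZMod n, z ^ b.val = ∑ k ∈ Finset.range n, z ^ k := by
    refine Finset.sum_nbij' (fun b : ZMod n => b.val) (fun k : ℕ => (k : ZMod n))
      (fun b _ => Finset.mem_range.mpr (ZMod.val_lt b)) (fun k _ => Finset.mem_univ _)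
      (fun b _ => by simp [ZMod.natCast_val, ZMod.cast_id])
      (fun k hk => ZMod.val_cast_of_lt (Finset.mem_range.mp hk))
      (fun b _ => rfl)
  rw [hsum]
  by_cases hj : j = 0
  · simp [hj, hz, ZMod.val_zero]
  · have h2j : (2 * j : ZMod n) ≠ 0 := by
      intro h
      apply hj
      have h1 : ((2 * j.val : ℕ) : ZMod n) = 0 := by
        push_cast [ZMod.natCast_val, ZMod.cast_id]; exact h
      rw [ZMod.natCast_eq_zero_iff] at h1
      have hcop : Nat.Coprime n 2 := hodd.coprime_two_right
      have h2 : n ∣ j.val := Nat.Coprime.dvd_of_dvd_mul_left hcop h1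
      have hv : j.val = 0 := Nat.eq_zero_of_dvd_of_lt h2 (ZMod.val_lt j)
      exact (ZMod.val_eq_zero j).mp hv
    have hz1 : z ≠ 1 := by
      intro h
      rw [hz, hw.pow_eq_one_iff_dvd] at h
      exact h2j ((ZMod.val_eq_zero _).mp
        (Nat.eq_zero_of_dvd_of_lt h (ZMod.val_lt _)))
    have hzn : z ^ n = 1 := by
      rw [hz, ← pow_mul, mul_comm, pow_mul]
      simp [hw.pow_eq_one]
    rw [if_neg hj, geom_sum_eq hz1, hzn, sub_self, zero_div]

lemma sum_kron {ι : Type*} (s : Finset ι) (A : ι → Matrix (ZMod n) (ZMod n) ℂ)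
    (B : Matrix (ZMod n) (ZMod n) ℂ) :
    (∑ x ∈ s, A x) ⊗ₖ B = ∑ x ∈ s, A x ⊗ₖ B := by
  ext ⟨p, q⟩ ⟨r, t⟩
  simp [Matrix.kroneckerMap_apply, Matrix.sum_apply, Finset.sum_mul]

lemma kron_sum {ι : Type*} (s : Finset ι) (A : Matrix (ZMod n) (ZMod n) ℂ)
    (B : ι → Matrix (ZMod n) (ZMod n) ℂ) :
    A ⊗ₖ (∑ x ∈ s, B x) = ∑ x ∈ s, A ⊗ₖ B x := by
  ext ⟨p, q⟩ ⟨r, t⟩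
  simp [Matrix.kroneckerMap_apply, Matrix.sum_apply, Finset.mul_sum]

lemma sum_EM_diag : ∑ k : ZMod n, EM n k k = 1 := by
  ext p q
  simp only [Matrix.sum_apply, EM, Matrix.single, Matrix.one_apply, Matrix.of_apply]
  by_cases h : p = q
  · simp [h]
  · simp only [h, if_false]
    refine Finset.sum_eq_zero fun x _ => ?_
    rw [if_neg]
    rintro ⟨rfl, rfl⟩
    exact h rfl

lemma sumQ (hw : IsPrimitiveRoot w n) (hodd : Odd n) :
    ∑ a : ZMod n, ∑ b : ZMod n, Qmat n w a b = (n : ℂ) • 1 := by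
  have step1 : ∀ a : ZMod n, ∑ b : ZMod n, Qmat n w a b
      = ∑ i : ZMod n, (n : ℂ) • (EM n (i + a) (i + a) ⊗ₖ EM n i i) := by
    intro a
    unfold Qmat
    rw [Finset.sum_comm]
    refine Finset.sum_congr rfl fun i _ => ?_
    rw [Finset.sum_comm]
    have : ∀ j : ZMod n, ∑ b : ZMod n,
        w ^ ((2 * b * j : ZMod n)).val • (EM n (i + a + j) (i + a) ⊗ₖ EM n (i + j) i)
        = (if j = 0 then (n : ℂ) else 0) • (EM n (i + a + j) (i + a) ⊗ₖ EM n (i + j) i) := by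
      intro j
      rw [← Finset.sum_smul, geom hw hodd]
    simp only [this, ite_smul, zero_smul]
    rw [Finset.sum_ite_eq' Finset.univ (0 : ZMod n)]
    simp
  simp only [step1]
  rw [Finset.sum_comm]
  have : ∀ i : ZMod n, ∑ a : ZMod n, (n : ℂ) • (EM n (i + a) (i + a) ⊗ₖ EM n i i)
      = (n : ℂ) • ((1 : Matrix (ZMod n) (ZMod n) ℂ) ⊗ₖ EM n i i) := by
    intro i
    rw [← Finset.smul_sum, ← sum_kron, Fintype.sum_equiv (Equiv.addLeft i)
      (fun a => EM n (i + a) (i + a)) (fun k => EM n k k) (fun a => rfl), sum_EM_diag]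
  simp only [this]
  rw [← Finset.smul_sum, ← kron_sum, sum_EM_diag, Matrix.one_kronecker_one]

end aux

section comb
variable {n : ℕ} [NeZero n]

/-- the embedding of the index set into `(ZMod n)²`. -/
def fS (n : ℕ) [NeZero n] : ℕ × ℕ → ZMod n × ZMod n :=
  fun p => ((p.1 : ZMod n), (p.2 : ZMod n))

/-- the negated embedding of the index set into `(ZMod n)²`. -/
def gS (n : ℕ) [NeZero n] : ℕ × ℕ → ZMod n × ZMod n :=
  fun p => (-(p.1 : ZMod n), -(p.2 : ZMod n))

lemma val_cast_self (x : ZMod n) : ((x.val : ℕ) : ZMod n) = x := by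
  simp [ZMod.natCast_val, ZMod.cast_id]

lemma cast_eq_zero_iff' {a : ℕ} (ha : a < n) : ((a : ZMod n) = 0) ↔ a = 0 := by
  rw [ZMod.natCast_eq_zero_iff]
  exact ⟨fun h => Nat.eq_zero_of_dvd_of_lt h ha, fun h => h ▸ dvd_zero n⟩

lemma mem_idxS {p : ℕ × ℕ} : p ∈ idxS n ↔ p.1 < n ∧ p.2 < n ∧
    ((p.1 = 0 ∧ p.2 = 0) ∨ (p.1 = 0 ∧ 1 ≤ p.2 ∧ p.2 ≤ (n - 1) / 2)
      ∨ (1 ≤ p.1 ∧ p.1 ≤ (n - 1) / 2)) := by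
  simp [idxS, Finset.mem_filter, Finset.mem_product, Finset.mem_range, and_assoc]

lemma fS_injOn : Set.InjOn (fS n) (idxS n) := by
  intro p hp q hq h
  rw [Finset.mem_coe, mem_idxS] at hp hq
  have h1 := congrArg (fun x => (x.1).val) h
  have h2 := congrArg (fun x => (x.2).val) h
  simp only [fS, ZMod.val_cast_of_lt hp.1, ZMod.val_cast_of_lt hq.1,
    ZMod.val_cast_of_lt hp.2.1, ZMod.val_cast_of_lt hq.2.1] at h1 h2
  exact Prod.ext h1 h2

lemma gS_injOn : Set.InjOn (gS n) (idxS n) := by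
  intro p hp q hq h
  apply fS_injOn hp hq
  simp only [gS, Prod.mk.injEq, neg_inj] at h
  exact Prod.ext h.1 h.2

lemma neg_cast_sub {k : ℕ} (h : k ≤ n) : -(((n - k : ℕ) : ZMod n)) = (k : ZMod n) := by
  rw [Nat.cast_sub h]
  simp

lemma union_eq (hodd : Odd n) :
    (idxS n).image (fS n) ∪ (idxS n).image (gS n) = Finset.univ := by
  have hm : n = 2 * ((n - 1) / 2) + 1 := by
    rcases hodd with ⟨k, hk⟩; omega
  set m := (n - 1) / 2 with hmdef
  have hnpos : 0 < n := Nat.pos_of_ne_zero (NeZero.ne n)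
  ext x
  simp only [Finset.mem_union, Finset.mem_image, Finset.mem_univ, iff_true]
  obtain ⟨x1, x2⟩ := x
  by_cases h1 : x1.val ≤ m
  · by_cases h1z : x1.val = 0
    · have hx1 : x1 = 0 := (ZMod.val_eq_zero x1).mp h1z
      by_cases h2 : x2.val ≤ m
      · left
        refine ⟨(0, x2.val), mem_idxS.mpr ⟨hnpos, ZMod.val_lt x2, ?_⟩, ?_⟩
        · rcases Nat.eq_zero_or_pos x2.val with h0 | hpos
          · exact Or.inl ⟨rfl, h0⟩
          · exact Or.inr (Or.inl ⟨rfl, hpos, h2⟩)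
        · simp [fS, hx1, val_cast_self]
      · right
        refine ⟨(0, n - x2.val), mem_idxS.mpr ⟨hnpos, by omega, ?_⟩, ?_⟩
        · have : 1 ≤ n - x2.val ∧ n - x2.val ≤ m := by
            have := ZMod.val_lt x2; omega
          exact Or.inr (Or.inl ⟨rfl, this.1, this.2⟩)
        · simp only [gS, Nat.cast_zero, neg_zero, hx1]
          exact Prod.ext rfl (by rw [neg_cast_sub (le_of_lt (ZMod.val_lt x2)), val_cast_self])
    · left
      refine ⟨(x1.val, x2.val), mem_idxS.mpr ⟨ZMod.val_lt x1, ZMod.val_lt x2, ?_⟩, ?_⟩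
      · exact Or.inr (Or.inr ⟨by omega, h1⟩)
      · simp [fS, val_cast_self]
  · right
    refine ⟨(n - x1.val, if x2.val = 0 then 0 else n - x2.val),
      mem_idxS.mpr ⟨by omega, ?_, ?_⟩, ?_⟩
    · split <;> omega
    · refine Or.inr (Or.inr ⟨?_, ?_⟩)
      · have := ZMod.val_lt x1; omega
      · omega
    · refine Prod.ext ?_ ?_
      · show -(((n - x1.val : ℕ) : ZMod n)) = x1
        rw [neg_cast_sub (le_of_lt (ZMod.val_lt x1)), val_cast_self]
      · show -((((if x2.val = 0 then 0 else n - x2.val) : ℕ) : ZMod n)) = x2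
        split
        · rename_i h0
          simp [(ZMod.val_eq_zero x2).mp h0]
        · rw [neg_cast_sub (le_of_lt (ZMod.val_lt x2)), val_cast_self]

lemma inter_eq (hodd : Odd n) :
    (idxS n).image (fS n) ∩ (idxS n).image (gS n) = {((0 : ZMod n), (0 : ZMod n))} := by
  have hm : n = 2 * ((n - 1) / 2) + 1 := by
    rcases hodd with ⟨k, hk⟩; omega
  set m := (n - 1) / 2 with hmdef
  have hnpos : 0 < n := Nat.pos_of_ne_zero (NeZero.ne n)
  ext x
  simp only [Finset.mem_inter, Finset.mem_image, Finset.mem_singleton]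
  constructor
  · rintro ⟨⟨p, hp, rfl⟩, ⟨q, hq, hgq⟩⟩
    rw [mem_idxS] at hp hq
    have hp1 : p.1 ≤ m := by rcases hp.2.2 with ⟨h, -⟩ | ⟨h, -⟩ | ⟨-, h⟩ <;> omega
    have hq1 : q.1 ≤ m := by rcases hq.2.2 with ⟨h, -⟩ | ⟨h, -⟩ | ⟨-, h⟩ <;> omega
    have e1 : ((p.1 + q.1 : ℕ) : ZMod n) = 0 := by
      have := congrArg Prod.fst hgq
      simp only [gS, fS] at this
      push_cast
      rw [← this]
      ring
    have e1' : p.1 = 0 ∧ q.1 = 0 := by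
      have := Nat.eq_zero_of_dvd_of_lt ((ZMod.natCast_eq_zero_iff _ _).mp e1) (by omega)
      omega
    have hp2 : p.2 ≤ m := by rcases hp.2.2 with ⟨-, h⟩ | ⟨-, -, h⟩ | ⟨h, -⟩ <;> omega
    have hq2 : q.2 ≤ m := by rcases hq.2.2 with ⟨-, h⟩ | ⟨-, -, h⟩ | ⟨h, -⟩ <;> omega
    have e2 : ((p.2 + q.2 : ℕ) : ZMod n) = 0 := by
      have := congrArg Prod.snd hgq
      simp only [gS, fS] at this
      push_cast
      rw [← this]
      ring
    have e2' : p.2 = 0 ∧ q.2 = 0 := by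
      have := Nat.eq_zero_of_dvd_of_lt ((ZMod.natCast_eq_zero_iff _ _).mp e2) (by omega)
      omega
    simp [fS, e1'.1, e2'.1]
  · rintro rfl
    constructor
    · exact ⟨(0, 0), mem_idxS.mpr ⟨hnpos, hnpos, Or.inl ⟨rfl, rfl⟩⟩, by simp [fS]⟩
    · exact ⟨(0, 0), mem_idxS.mpr ⟨hnpos, hnpos, Or.inl ⟨rfl, rfl⟩⟩, by simp [gS]⟩

end comb

/-- weighted one-sided block. -/
noncomputable def Fmat (n : ℕ) [NeZero n] (w : ℂ) (β : ZMod n × ZMod n) :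
    Matrix (ZMod n × ZMod n) (ZMod n × ZMod n) ℂ :=
  (if β = ((0 : ZMod n), (0 : ZMod n)) then (1/2 : ℂ) else 1) • Qmat n w β.1 β.2

/-- the projections `p^α`, `α ∈ S`, sum to the identity on ℂⁿ ⊗ ℂⁿ. -/
theorem stmt5 (n : ℕ) [NeZero n] (hodd : Odd n) (w : ℂ) (hw : IsPrimitiveRoot w n) :
    ∑ α ∈ idxS n, proj n w α.1 α.2 = (1 : Matrix (ZMod n × ZMod n) (ZMod n × ZMod n) ℂ) := by
  classical
  have hcz : ∀ α ∈ idxS n, (ccoef α.1 α.2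
      = (if fS n α = ((0 : ZMod n), (0 : ZMod n)) then (1/2 : ℂ) else 1))
      ∧ (ccoef α.1 α.2
      = (if gS n α = ((0 : ZMod n), (0 : ZMod n)) then (1/2 : ℂ) else 1)) := by
    intro α hα
    rw [mem_idxS] at hα
    have hf : fS n α = ((0 : ZMod n), (0 : ZMod n)) ↔ (α.1 = 0 ∧ α.2 = 0) := by
      simp only [fS, Prod.mk.injEq]
      rw [cast_eq_zero_iff' hα.1, cast_eq_zero_iff' hα.2.1]
    have hg : gS n α = ((0 : ZMod n), (0 : ZMod n)) ↔ (α.1 = 0 ∧ α.2 = 0) := by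
      simp only [gS, Prod.mk.injEq, neg_eq_zero]
      rw [cast_eq_zero_iff' hα.1, cast_eq_zero_iff' hα.2.1]
    constructor
    · simp only [ccoef]
      by_cases h : α.1 = 0 ∧ α.2 = 0
      · rw [if_pos h, if_pos (hf.mpr h)]
      · rw [if_neg h, if_neg (fun hc => h (hf.mp hc))]
    · simp only [ccoef]
      by_cases h : α.1 = 0 ∧ α.2 = 0
      · rw [if_pos h, if_pos (hg.mpr h)]
      · rw [if_neg h, if_neg (fun hc => h (hg.mp hc))]
  have hproj : ∀ α ∈ idxS n, proj n w α.1 α.2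
      = (n : ℂ)⁻¹ • (Fmat n w (fS n α) + Fmat n w (gS n α)) := by
    intro α hα
    rw [proj_eq hw α.1 α.2]
    have hfa : Fmat n w (fS n α) = ccoef α.1 α.2 • Qmat n w (α.1 : ZMod n) (α.2 : ZMod n) := by
      rw [Fmat, ← (hcz α hα).1]; rfl
    have hga : Fmat n w (gS n α)
        = ccoef α.1 α.2 • Qmat n w (-(α.1 : ZMod n)) (-(α.2 : ZMod n)) := by
      rw [Fmat, ← (hcz α hα).2]; rfl
    rw [hfa, hga, ← smul_add, smul_smul, div_eq_mul_inv, mul_comm]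
  rw [Finset.sum_congr rfl hproj, ← Finset.smul_sum, Finset.sum_add_distrib]
  rw [show (∑ x ∈ idxS n, Fmat n w (fS n x))
      = ∑ y ∈ (idxS n).image (fS n), Fmat n w y from
    (Finset.sum_image (fun x hx y hy h =>
      fS_injOn (Finset.mem_coe.mpr hx) (Finset.mem_coe.mpr hy) h)).symm]
  rw [show (∑ x ∈ idxS n, Fmat n w (gS n x))
      = ∑ y ∈ (idxS n).image (gS n), Fmat n w y from
    (Finset.sum_image (fun x hx y hy h =>
      gS_injOn (Finset.mem_coe.mpr hx) (Finset.mem_coe.mpr hy) h)).symm]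
  rw [← Finset.sum_union_inter, union_eq hodd, inter_eq hodd, Finset.sum_singleton]
  have hFQ : ∑ β : ZMod n × ZMod n, Fmat n w β + Fmat n w ((0 : ZMod n), (0 : ZMod n))
      = ∑ β : ZMod n × ZMod n, Qmat n w β.1 β.2 := by
    rw [← Finset.sum_erase_add Finset.univ (Fmat n w)
        (Finset.mem_univ ((0 : ZMod n), (0 : ZMod n))),
      ← Finset.sum_erase_add Finset.univ (fun β => Qmat n w β.1 β.2)
        (Finset.mem_univ ((0 : ZMod n), (0 : ZMod n)))]
    have herase : ∀ β ∈ Finset.univ.erase ((0 : ZMod n), (0 : ZMod n)),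
        Fmat n w β = Qmat n w β.1 β.2 := by
      intro β hβ
      rw [Fmat, if_neg (Finset.mem_erase.mp hβ).1, one_smul]
    rw [Finset.sum_congr rfl herase, add_assoc]
    congr 1
    rw [Fmat, if_pos rfl, ← add_smul]
    norm_num
  rw [hFQ]
  have hprod : ∑ β : ZMod n × ZMod n, Qmat n w β.1 β.2
      = ∑ a : ZMod n, ∑ b : ZMod n, Qmat n w a b :=
    Fintype.sum_prod_type (f := fun β : ZMod n × ZMod n => Qmat n w β.1 β.2)
  rw [hprod, sumQ hw hodd, smul_smul, inv_mul_cancel₀ (by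
    exact_mod_cast Nat.cast_ne_zero.mpr (NeZero.ne n) : (n : ℂ) ≠ 0), one_smul]
end

section
/- Let n ≥ 3 be odd, w a primitive n-th root of unity, and g_{(a,j)}(z) as above. Then R(z) = Σ_{i,j,a=0}^{n-1} g_{(a,j)}(z) e_{i+j,i+a} ⊗ e_{i+a+j,i} is symmetric: R(z)^t = R(z) for all z ∈ ℂ where it is defined. -/
open Matrix Kronecker Finset

/-- `g_{(a,j)}(z) = (1/n) Σ_{b=0}^{n-1} w^{2bj} ∏_{p=1}^{a}
(z + w^{2(2p-1+b-a)})/(1 + z w^{2(2p-1+b-a)})`. -/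
noncomputable def gfun (n : ℕ) (w : ℂ) (a : ℕ) (j : ℤ) (z : ℂ) : ℂ :=
  (1 / (n : ℂ)) * ∑ b ∈ Finset.range n, w ^ (2 * (b : ℤ) * j) *
    ∏ p ∈ Finset.range a,
      (z + w ^ (2 * (2 * ((p : ℤ) + 1) - 1 + (b : ℤ) - (a : ℤ)))) /
        (1 + z * w ^ (2 * (2 * ((p : ℤ) + 1) - 1 + (b : ℤ) - (a : ℤ))))

/-- `R(z) = Σ_{i,j,a=0}^{n-1} g_{(a,j)}(z) e_{i+j,i+a} ⊗ e_{i+a+j,i}`. -/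
noncomputable def Rmat (n : ℕ) [NeZero n] (w z : ℂ) :
    Matrix (ZMod n × ZMod n) (ZMod n × ZMod n) ℂ :=
  ∑ i : ZMod n, ∑ j ∈ Finset.range n, ∑ a ∈ Finset.range n,
    gfun n w a (j : ℤ) z •
      (EM n (i + (j : ZMod n)) (i + (a : ZMod n)) ⊗ₖ EM n (i + (a : ZMod n) + (j : ZMod n)) i)

noncomputable def fC (w z : ℂ) (c : ℤ) : ℂ := (z + w ^ (2*c)) / (1 + z * w ^ (2*c))

section aux
variable {n : ℕ} {w z : ℂ}

lemma wne (hn : 3 ≤ n) (hw : IsPrimitiveRoot w n) : w ≠ 0 :=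
  hw.ne_zero (by omega)

lemma wpow_congr (hn : 3 ≤ n) (hw : IsPrimitiveRoot w n) {c d : ℤ}
    (h : c ≡ d [ZMOD n]) : w ^ c = w ^ d := by
  have hw0 : w ≠ 0 := wne hn hw
  obtain ⟨k, hk⟩ := h.dvd
  have : d = c + n * k := by linarith [hk]
  subst this
  rw [zpow_add₀ hw0, _root_.zpow_mul, zpow_natCast, hw.pow_eq_one, _root_.one_zpow, mul_one]

lemma fC_congr (hn : 3 ≤ n) (hw : IsPrimitiveRoot w n) {c d : ℤ}
    (h : c ≡ d [ZMOD n]) : fC w z c = fC w z d := by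
  unfold fC
  rw [wpow_congr hn hw (h.mul_left 2)]

lemma fC_zero (hz : ∀ c : ℤ, 1 + z * w ^ c ≠ 0) : fC w z 0 = 1 := by
  have := hz 0
  simp only [zpow_zero, mul_one] at this
  simp [fC, add_comm z 1, div_self, this]

lemma fC_mul_neg (hn : 3 ≤ n) (hw : IsPrimitiveRoot w n)
    (hz : ∀ c : ℤ, 1 + z * w ^ c ≠ 0) (c : ℤ) : fC w z c * fC w z (-c) = 1 := by
  have hw0 : w ≠ 0 := wne hn hw
  have h1 : (1 + z * w ^ (2*c)) ≠ 0 := hz _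
  have h2 : (1 + z * w ^ (2*(-c))) ≠ 0 := hz _
  have hneg : w ^ (2*(-c)) = (w ^ (2*c))⁻¹ := by
    rw [show 2*(-c) = -(2*c) by ring, _root_.zpow_neg]
  rw [hneg] at h2
  unfold fC
  rw [hneg]
  have hu0 : w ^ (2*c) ≠ 0 := zpow_ne_zero _ hw0
  rw [div_mul_div_comm, div_eq_one_iff_eq (mul_ne_zero h1 h2)]
  field_simp
  ring

/-- congruence between an integer and the `val` of its image in `ZMod n`. -/
lemma int_cong_val [NeZero n] (c : ℤ) : c ≡ (((c : ZMod n).val : ℕ) : ℤ) [ZMOD n] := by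
  rw [← ZMod.intCast_eq_intCast_iff]
  push_cast
  rw [ZMod.natCast_val, ZMod.cast_id]

lemma fC_val [NeZero n] (hn : 3 ≤ n) (hw : IsPrimitiveRoot w n) (c : ℤ) :
    fC w z c = fC w z (((c : ZMod n).val : ℕ) : ℤ) :=
  fC_congr hn hw (int_cong_val c)

lemma two_unit [NeZero n] (hodd : Odd n) : IsUnit (2 : ZMod n) := by
  have := (ZMod.isUnit_iff_coprime 2 n).mpr (Nat.coprime_two_left.mpr hodd)
  simpa using this

lemma prod_univ_fC [NeZero n] (hn : 3 ≤ n) (hodd : Odd n) (hw : IsPrimitiveRoot w n)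
    (hz : ∀ c : ℤ, 1 + z * w ^ c ≠ 0) :
    ∏ x : ZMod n, fC w z ((x.val : ℕ) : ℤ) = 1 := by
  refine Finset.prod_involution (fun x _ => -x) ?_ ?_ (fun x _ => Finset.mem_univ _)
    (fun x _ => neg_neg x)
  · intro x _
    have hcong : (((-x).val : ℕ) : ℤ) ≡ -((x.val : ℕ) : ℤ) [ZMOD n] := by
      rw [← ZMod.intCast_eq_intCast_iff]
      push_cast
      rw [ZMod.natCast_val, ZMod.natCast_val, ZMod.cast_id, ZMod.cast_id]
    rw [fC_congr hn hw hcong]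
    exact fC_mul_neg hn hw hz _
  · intro x _ hne h
    apply hne
    have hx0 : x = 0 := by
      have h2 : (2 : ZMod n) * x = 0 := by linear_combination -h
      have := two_unit hodd
      exact (this.mul_right_eq_zero).mp h2
    subst hx0
    simpa using fC_zero (z := z) hz

lemma prod_range_toZMod [NeZero n] (F : ZMod n → ℂ) :
    ∏ p ∈ Finset.range n, F ((p : ℕ) : ZMod n) = ∏ x : ZMod n, F x := by
  refine Finset.prod_nbij' (fun p => ((p : ℕ) : ZMod n)) (fun x => x.val) ?_ ?_ ?_ ?_ ?_
  · intro p _; exact Finset.mem_univ _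
  · intro x _; exact Finset.mem_range.mpr x.val_lt
  · intro p hp; exact ZMod.val_cast_of_lt (Finset.mem_range.mp hp)
  · intro x _; exact ZMod.natCast_rightInverse x
  · intro p _; rfl

lemma prod_fC_affine [NeZero n] (hn : 3 ≤ n) (hodd : Odd n) (hw : IsPrimitiveRoot w n)
    (hz : ∀ c : ℤ, 1 + z * w ^ c ≠ 0) (c : ℤ) :
    ∏ p ∈ Finset.range n, fC w z (2*((p:ℤ)+1)-1+c) = 1 := by
  set e : ZMod n := ((1 + c : ℤ) : ZMod n) with he
  have hstep : ∀ p : ℕ,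
      fC w z (2*((p:ℤ)+1)-1+c)
        = fC w z ((((2 * ((p : ℕ) : ZMod n) + e).val : ℕ)) : ℤ) := by
    intro p
    have h0 := fC_val (z := z) hn hw (2*((p:ℤ)+1)-1+c)
    rw [h0]
    congr 2
    rw [he]
    push_cast
    ring
  calc ∏ p ∈ Finset.range n, fC w z (2*((p:ℤ)+1)-1+c)
      = ∏ p ∈ Finset.range n, fC w z ((((2 * ((p : ℕ) : ZMod n) + e).val : ℕ)) : ℤ) :=
        Finset.prod_congr rfl fun p _ => hstep p
    _ = ∏ x : ZMod n, fC w z ((((2 * x + e).val : ℕ)) : ℤ) :=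
        prod_range_toZMod (fun x : ZMod n => fC w z ((((2 * x + e).val : ℕ)) : ℤ))
    _ = ∏ x : ZMod n, fC w z ((x.val : ℕ) : ℤ) := by
        refine Finset.prod_bijective (fun x : ZMod n => 2 * x + e) ?_ (by simp) (fun x _ => rfl)
        rw [Finite.injective_iff_bijective.symm]
        intro x y hxy
        have h2 : (2 : ZMod n) * x = 2 * y := add_right_cancel hxy
        exact (two_unit hodd).mul_left_cancel h2
    _ = 1 := prod_univ_fC hn hodd hw hz

end aux
section aux2
variable {n : ℕ} {w z : ℂ}

lemma modeq_of_eq_add_n {x y : ℤ} {n : ℕ} (h : x = y + n) : x ≡ y [ZMOD n] := by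
  show x % n = y % n
  rw [h, show y + (n:ℤ) = y + (n:ℤ) * 1 by ring, Int.add_mul_emod_self_left]

lemma nmod_lt (hn : 3 ≤ n) (b : ℕ) : (n - b) % n < n := Nat.mod_lt _ (by omega)

lemma inv_inv_nat (hn : 3 ≤ n) {b : ℕ} (hb : b < n) : (n - (n - b) % n) % n = b := by
  rcases Nat.eq_zero_or_pos b with rfl | hbp
  · simp [Nat.mod_self]
  · have h1 : n - b < n := by omega
    rw [Nat.mod_eq_of_lt h1, show n - (n - b) = b by omega, Nat.mod_eq_of_lt hb]

lemma cast_nmod [NeZero n] {b : ℕ} (hb : b ≤ n) :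
    (((n - b) % n : ℕ) : ZMod n) = -(b : ZMod n) := by
  rw [ZMod.natCast_mod, Nat.cast_sub hb, ZMod.natCast_self, zero_sub]

lemma mod_cong [NeZero n] {b : ℕ} (hb : b ≤ n) :
    (((n - b) % n : ℕ) : ℤ) ≡ -(b : ℤ) [ZMOD n] := by
  rw [← ZMod.intCast_eq_intCast_iff]
  push_cast
  rw [Nat.cast_sub hb, ZMod.natCast_self, zero_sub]

lemma prod_flip [NeZero n] (hn : 3 ≤ n) (hodd : Odd n) (hw : IsPrimitiveRoot w n)
    (hz : ∀ c : ℤ, 1 + z * w ^ c ≠ 0) {a : ℕ} (ha : a < n) {b : ℕ} (hb : b < n) :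
    ∏ p ∈ Finset.range ((n - a) % n),
        fC w z (2*((p:ℤ)+1)-1+(b:ℤ)-((((n - a) % n : ℕ)):ℤ))
      = ∏ p ∈ Finset.range a,
        fC w z (2*((p:ℤ)+1)-1+((((n - b) % n : ℕ)):ℤ)-(a:ℤ)) := by
  rcases Nat.eq_zero_or_pos a with rfl | hap
  · simp [Nat.mod_self]
  · have ha' : (n - a) % n = n - a := Nat.mod_eq_of_lt (by omega)
    rw [ha']
    set B : ℤ := (((n - b) % n : ℕ) : ℤ) with hBdef
    have hB : B ≡ -(b : ℤ) [ZMOD n] := mod_cong (le_of_lt hb)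
    have hcast : ((n - a : ℕ) : ℤ) = (n : ℤ) - a := by
      push_cast [Nat.cast_sub (le_of_lt ha)]; ring
    have hsplit := Finset.prod_range_add
      (fun p : ℕ => fC w z (2*((p:ℤ)+1)-1+((b:ℤ) - ((n - a : ℕ) : ℤ)))) (n - a) a
    rw [show (n - a) + a = n from by omega] at hsplit
    have hfull := hsplit.symm.trans (prod_fC_affine (z := z) hn hodd hw hz ((b:ℤ) - ((n - a : ℕ) : ℤ)))
    -- rewrite each factor of the second (tail) product
    have htail : ∀ p ∈ Finset.range a,
        fC w z (2*((((n - a) + p : ℕ) : ℤ)+1)-1+((b:ℤ) - ((n - a : ℕ) : ℤ)))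
          = fC w z (2*((p:ℤ)+1)-1+(b:ℤ)-(a:ℤ)) := by
      intro p _
      refine fC_congr hn hw (modeq_of_eq_add_n ?_)
      push_cast [hcast]
      ring
    rw [Finset.prod_congr rfl htail] at hfull
    -- rewrite each factor of the head product to match the LHS
    have hhead : ∀ p ∈ Finset.range (n - a),
        fC w z (2*((p : ℤ)+1)-1+((b:ℤ) - ((n - a : ℕ) : ℤ)))
          = fC w z (2*((p:ℤ)+1)-1+(b:ℤ)-(((n - a : ℕ)):ℤ)) := by
      intro p _
      congr 1
      ring
    rw [Finset.prod_congr rfl hhead] at hfull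
    -- hfull : P' * Q₀ = 1
    set Q0 : ℂ := ∏ p ∈ Finset.range a, fC w z (2*((p:ℤ)+1)-1+(b:ℤ)-(a:ℤ)) with hQ0
    set P' : ℂ := ∏ p ∈ Finset.range (n - a), fC w z (2*((p:ℤ)+1)-1+(b:ℤ)-(((n - a : ℕ)):ℤ)) with hP'
    have hQQ : (∏ p ∈ Finset.range a, fC w z (2*((p:ℤ)+1)-1+B-(a:ℤ))) * Q0 = 1 := by
      have hrefl := (Finset.prod_range_reflect
        (fun p => fC w z (2*((p:ℤ)+1)-1+B-(a:ℤ))) a).symm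
      rw [hrefl, hQ0, ← Finset.prod_mul_distrib]
      refine Finset.prod_eq_one ?_
      intro p hp
      have hple : p < a := Finset.mem_range.mp hp
      have hc : (2*(((a - 1 - p : ℕ) : ℤ)+1)-1+B-(a:ℤ))
          ≡ -(2*((p:ℤ)+1)-1+(b:ℤ)-(a:ℤ)) [ZMOD n] := by
        have hsub : ((a - 1 - p : ℕ) : ℤ) = (a : ℤ) - 1 - p := by
          push_cast [Nat.cast_sub (by omega : p ≤ a - 1), Nat.cast_sub (by omega : 1 ≤ a)]
          ring
        rw [hsub]
        calc 2*(((a:ℤ) - 1 - p)+1)-1+B-(a:ℤ)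
            = B + ((a:ℤ) - 2*p - 1 - b) + b := by ring
          _ ≡ -(b:ℤ) + ((a:ℤ) - 2*p - 1 - b) + b [ZMOD n] := by
              exact (hB.add_right _).add_right _
          _ = -(2*((p:ℤ)+1)-1+(b:ℤ)-(a:ℤ)) := by ring
      rw [fC_congr hn hw hc, mul_comm]
      exact fC_mul_neg hn hw hz _
    have hQ0ne : Q0 ≠ 0 := by
      intro h0
      rw [h0, mul_zero] at hQQ
      exact zero_ne_one hQQ
    have : P' * Q0 = (∏ p ∈ Finset.range a, fC w z (2*((p:ℤ)+1)-1+B-(a:ℤ))) * Q0 :=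
      hfull.trans hQQ.symm
    exact mul_right_cancel₀ hQ0ne this

end aux2
section aux3
variable {n : ℕ} {w z : ℂ}

lemma gfun_symm [NeZero n] (hn : 3 ≤ n) (hodd : Odd n) (hw : IsPrimitiveRoot w n)
    (hz : ∀ c : ℤ, 1 + z * w ^ c ≠ 0) {a j : ℕ} (ha : a < n) (hj : j < n) :
    gfun n w ((n - a) % n) ((((n - j) % n : ℕ)) : ℤ) z = gfun n w a (j : ℤ) z := by
  unfold gfun
  congr 1
  refine Finset.sum_nbij' (fun b => (n - b) % n) (fun b => (n - b) % n)
    (fun b _ => Finset.mem_range.mpr (nmod_lt hn _))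
    (fun b _ => Finset.mem_range.mpr (nmod_lt hn _))
    (fun b hb => inv_inv_nat hn (Finset.mem_range.mp hb))
    (fun b hb => inv_inv_nat hn (Finset.mem_range.mp hb)) ?_
  intro b hb
  have hble : b < n := Finset.mem_range.mp hb
  show w ^ (2 * (b:ℤ) * ((((n - j) % n : ℕ)):ℤ)) *
      (∏ p ∈ Finset.range ((n - a) % n),
        fC w z (2*((p:ℤ)+1)-1+(b:ℤ)-((((n - a) % n : ℕ)):ℤ)))
    = w ^ (2 * ((((n - b) % n : ℕ)):ℤ) * (j:ℤ)) *
      ∏ p ∈ Finset.range a,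
        fC w z (2*((p:ℤ)+1)-1+((((n - b) % n : ℕ)):ℤ)-(a:ℤ))
  congr 1
  · apply wpow_congr hn hw
    calc 2 * (b:ℤ) * ((((n - j) % n : ℕ)):ℤ)
        ≡ 2 * (b:ℤ) * (-(j:ℤ)) [ZMOD n] := (mod_cong hj.le).mul_left _
      _ = 2 * (-(b:ℤ)) * (j:ℤ) := by ring
      _ ≡ 2 * ((((n - b) % n : ℕ)):ℤ) * (j:ℤ) [ZMOD n] :=
          ((mod_cong hble.le).symm.mul_left 2).mul_right _
  · exact prod_flip hn hodd hw hz ha hble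

end aux3
section aux4
variable {n : ℕ} [NeZero n]

lemma EM_transpose (i j : ZMod n) : (EM n i j)ᵀ = EM n j i := by
  ext a b
  simp only [EM, Matrix.transpose_apply, Matrix.single, Matrix.of_apply]
  by_cases h1 : i = b <;> by_cases h2 : j = a <;> simp [h1, h2]

lemma triple_sum_eq (F : ZMod n × ℕ × ℕ → Matrix (ZMod n × ZMod n) (ZMod n × ZMod n) ℂ) :
    (∑ x ∈ (Finset.univ : Finset (ZMod n)) ×ˢ (Finset.range n ×ˢ Finset.range n), F x)
      = ∑ i : ZMod n, ∑ j ∈ Finset.range n, ∑ a ∈ Finset.range n, F (i, j, a) := by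
  rw [Finset.sum_product]
  exact Finset.sum_congr rfl fun i _ => by rw [Finset.sum_product]

/-- `R(z)` is symmetric: `R(z)ᵀ = R(z)` wherever it is defined. -/
theorem stmt8 (n : ℕ) [NeZero n] (hn : 3 ≤ n) (hodd : Odd n)
    (w : ℂ) (hw : IsPrimitiveRoot w n) (z : ℂ)
    (hz : ∀ c : ℤ, 1 + z * w ^ c ≠ 0) :
    (Rmat n w z)ᵀ = Rmat n w z := by
  unfold Rmat
  simp only [Matrix.transpose_sum, Matrix.transpose_smul,
    ← Matrix.kroneckerMap_transpose, EM_transpose]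
  rw [← triple_sum_eq (fun x => gfun n w x.2.2 ((x.2.1 : ℕ) : ℤ) z •
        (EM n (x.1 + (x.2.2 : ZMod n)) (x.1 + (x.2.1 : ZMod n)) ⊗ₖ
          EM n x.1 (x.1 + (x.2.2 : ZMod n) + (x.2.1 : ZMod n)))),
     ← triple_sum_eq (fun x => gfun n w x.2.2 ((x.2.1 : ℕ) : ℤ) z •
        (EM n (x.1 + (x.2.1 : ZMod n)) (x.1 + (x.2.2 : ZMod n)) ⊗ₖ
          EM n (x.1 + (x.2.2 : ZMod n) + (x.2.1 : ZMod n)) x.1))]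
  refine Finset.sum_nbij'
    (fun x => (x.1 + (x.2.2 : ZMod n) + (x.2.1 : ZMod n), (n - x.2.1) % n, (n - x.2.2) % n))
    (fun x => (x.1 + (x.2.2 : ZMod n) + (x.2.1 : ZMod n), (n - x.2.1) % n, (n - x.2.2) % n))
    ?_ ?_ ?_ ?_ ?_
  · rintro ⟨i, j, a⟩ _
    simp [Finset.mem_product, nmod_lt hn]
  · rintro ⟨i, j, a⟩ _
    simp [Finset.mem_product, nmod_lt hn]
  · rintro ⟨i, j, a⟩ hx
    simp only [Finset.mem_product, Finset.mem_range, Finset.mem_univ, true_and] at hx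
    obtain ⟨hj, ha⟩ := hx
    have e1 : (((n - ((n - a) % n)) % n : ℕ)) = a := inv_inv_nat hn ha
    have e2 : (((n - ((n - j) % n)) % n : ℕ)) = j := inv_inv_nat hn hj
    have c1 : (((n - j) % n : ℕ) : ZMod n) = -(j : ZMod n) := cast_nmod hj.le
    have c2 : (((n - a) % n : ℕ) : ZMod n) = -(a : ZMod n) := cast_nmod ha.le
    refine Prod.ext ?_ (Prod.ext ?_ ?_) <;> simp [c1, c2, e1, e2] <;> ring
  · rintro ⟨i, j, a⟩ hx
    simp only [Finset.mem_product, Finset.mem_range, Finset.mem_univ, true_and] at hx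
    obtain ⟨hj, ha⟩ := hx
    have e1 : (((n - ((n - a) % n)) % n : ℕ)) = a := inv_inv_nat hn ha
    have e2 : (((n - ((n - j) % n)) % n : ℕ)) = j := inv_inv_nat hn hj
    have c1 : (((n - j) % n : ℕ) : ZMod n) = -(j : ZMod n) := cast_nmod hj.le
    have c2 : (((n - a) % n : ℕ) : ZMod n) = -(a : ZMod n) := cast_nmod ha.le
    refine Prod.ext ?_ (Prod.ext ?_ ?_) <;> simp [c1, c2, e1, e2] <;> ring
  · rintro ⟨i, j, a⟩ hx
    simp only [Finset.mem_product, Finset.mem_range, Finset.mem_univ, true_and] at hx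
    obtain ⟨hj, ha⟩ := hx
    have c1 : (((n - j) % n : ℕ) : ZMod n) = -(j : ZMod n) := cast_nmod hj.le
    have c2 : (((n - a) % n : ℕ) : ZMod n) = -(a : ZMod n) := cast_nmod ha.le
    have hg : gfun n w ((n - a) % n) ((((n - j) % n : ℕ)) : ℤ) z = gfun n w a (j : ℤ) z :=
      gfun_symm hn hodd hw hz ha hj
    simp only [hg, c1, c2]
    rw [show i + (a : ZMod n) + (j : ZMod n) + -(j : ZMod n) = i + a from by ring,
      show i + (a : ZMod n) + (j : ZMod n) + -(a : ZMod n) = i + j from by ring,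
      show i + (j : ZMod n) + -(j : ZMod n) = i from by ring]
end aux4
end
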